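/- For r ∈ ℂ, the shadow operator ξ_r satisfies the equivariance ξ_r(F|_r g) = (ξ_r F)|_{2-r̄} g for every g ∈ SL₂(ℝ) and every F ∈ C²(ℍ). Consequently ξ_r maps r-harmonic (Γ,v)-automorphic forms of weight r to holomorphic (Γ, v̄)-automorphic forms of weight 2 - r̄. -/

import Mathlib

open Complex

noncomputable def mdenom (g : Matrix.SpecialLinearGroup (Fin 2) ℝ) (z : ℂ) : ℂ :=
  (g.1 1 0 : ℂ) * z + (g.1 1 1 : ℂ)

noncomputable def mact (g : Matrix.SpecialLinearGroup (Fin 2) ℝ) (z : ℂ) : ℂ :=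
  ((g.1 0 0 : ℂ) * z + (g.1 0 1 : ℂ)) / mdenom g z

noncomputable def wderivBar (F : ℂ → ℂ) (z : ℂ) : ℂ :=
  (fderiv ℝ F z 1 + Complex.I * fderiv ℝ F z Complex.I) / 2

noncomputable def wderiv (F : ℂ → ℂ) (z : ℂ) : ℂ :=
  (fderiv ℝ F z 1 - Complex.I * fderiv ℝ F z Complex.I) / 2

noncomputable def hlaplacian (r : ℂ) (F : ℂ → ℂ) (z : ℂ) : ℂ :=
  -4 * (z.im : ℂ) ^ 2 * wderiv (fun w => wderivBar F w) z +
    2 * Complex.I * r * (z.im : ℂ) * wderivBar F z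

noncomputable def shadowOp (r : ℂ) (F : ℂ → ℂ) (z : ℂ) : ℂ :=
  2 * Complex.I * ((z.im : ℂ) ^ (starRingEnd ℂ r)) * (starRingEnd ℂ) (wderivBar F z)


lemma clm_expand (L : ℂ →L[ℝ] ℂ) (v : ℂ) : L v = (v.re : ℂ) * L 1 + (v.im : ℂ) * L I := by
  have h : v = (v.re : ℝ) • (1 : ℂ) + (v.im : ℝ) • I := by
    simp [Complex.real_smul, Complex.re_add_im]
  calc L v = L ((v.re : ℝ) • (1 : ℂ) + (v.im : ℝ) • I) := by rw [← h]
    _ = (v.re : ℂ) * L 1 + (v.im : ℂ) * L I := by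
        rw [map_add, map_smul, map_smul]; simp [Complex.real_smul]

lemma fderiv_real_of_cdiff {h : ℂ → ℂ} {z : ℂ} (hd : DifferentiableAt ℂ h z) (v : ℂ) :
    fderiv ℝ h z v = deriv h z * v := by
  rw [hd.fderiv_restrictScalars ℝ, ContinuousLinearMap.coe_restrictScalars']
  have h1 : fderiv ℂ h z v = v * fderiv ℂ h z 1 := by
    conv_lhs => rw [show v = v • (1 : ℂ) by simp]
    rw [map_smul]; simp
  have h2 : deriv h z = fderiv ℂ h z 1 := rfl
  rw [h1, h2]; ring

lemma wderivBar_mul {G H : ℂ → ℂ} {z : ℂ} (hG : DifferentiableAt ℝ G z)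
    (hH : DifferentiableAt ℝ H z) :
    wderivBar (fun w => G w * H w) z = wderivBar G z * H z + G z * wderivBar H z := by
  unfold wderivBar
  rw [fderiv_fun_mul hG hH]
  simp only [ContinuousLinearMap.add_apply, ContinuousLinearMap.smul_apply, smul_eq_mul]
  ring

lemma wderivBar_const_mul {G : ℂ → ℂ} {z : ℂ} (hG : DifferentiableAt ℝ G z) (c : ℂ) :
    wderivBar (fun w => c * G w) z = c * wderivBar G z := by
  unfold wderivBar
  rw [fderiv_const_mul hG]
  simp only [ContinuousLinearMap.smul_apply, smul_eq_mul]
  ring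

lemma wderivBar_holo_mul {h G : ℂ → ℂ} {z : ℂ} (hh : DifferentiableAt ℂ h z)
    (hG : DifferentiableAt ℝ G z) :
    wderivBar (fun w => h w * G w) z = h z * wderivBar G z := by
  rw [wderivBar_mul (hh.restrictScalars ℝ) hG]
  have hwb : wderivBar h z = 0 := by
    unfold wderivBar
    rw [fderiv_real_of_cdiff hh, fderiv_real_of_cdiff hh]
    have : I * (deriv h z * I) = - deriv h z := by
      rw [mul_comm (deriv h z) I, ← mul_assoc, Complex.I_mul_I]; ring
    rw [this]; ring
  rw [hwb]; ring

lemma wderivBar_comp {F φ : ℂ → ℂ} {z : ℂ} (hφ : DifferentiableAt ℂ φ z)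
    (hF : DifferentiableAt ℝ F (φ z)) :
    wderivBar (fun w => F (φ w)) z = (starRingEnd ℂ) (deriv φ z) * wderivBar F (φ z) := by
  unfold wderivBar
  have hcomp : fderiv ℝ (fun w => F (φ w)) z =
      (fderiv ℝ F (φ z)).comp (fderiv ℝ φ z) :=
    fderiv_comp z hF (hφ.restrictScalars ℝ)
  rw [hcomp]
  set L := fderiv ℝ F (φ z)
  set c := deriv φ z
  have hφ1 : fderiv ℝ φ z 1 = c := by rw [fderiv_real_of_cdiff hφ]; ring
  have hφI : fderiv ℝ φ z I = c * I := by rw [fderiv_real_of_cdiff hφ]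
  simp only [ContinuousLinearMap.comp_apply, hφ1, hφI]
  rw [clm_expand L c, clm_expand L (c * I)]
  have hconj : (starRingEnd ℂ) c = (c.re : ℂ) - (c.im : ℂ) * I := by
    simp [Complex.ext_iff]
  rw [hconj]
  simp only [Complex.mul_re, Complex.mul_im, Complex.I_re, Complex.I_im]
  push_cast
  ring_nf
  rw [Complex.I_sq]
  ring

lemma wderivBar_conj {G : ℂ → ℂ} {z : ℂ} (hG : DifferentiableAt ℝ G z) :
    wderivBar (fun w => (starRingEnd ℂ) (G w)) z = (starRingEnd ℂ) (wderiv G z) := by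
  unfold wderivBar wderiv
  have h1 : fderiv ℝ (fun w => (starRingEnd ℂ) (G w)) z =
      (Complex.conjCLE : ℂ →L[ℝ] ℂ).comp (fderiv ℝ G z) := by
    have := ((Complex.conjCLE : ℂ →L[ℝ] ℂ).hasFDerivAt (x := G z)).comp z hG.hasFDerivAt
    have h2 := this.fderiv
    exact h2
  rw [h1]
  simp only [ContinuousLinearMap.comp_apply, ContinuousLinearEquiv.coe_coe,
    Complex.conjCLE_apply]
  rw [map_div₀, map_sub, map_mul]
  simp only [Complex.conj_I, map_ofNat]
  ring

lemma wderivBar_congr {G H : ℂ → ℂ} {z : ℂ} (h : G =ᶠ[nhds z] H) :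
    wderivBar G z = wderivBar H z := by
  unfold wderivBar; rw [h.fderiv_eq]

lemma differentiableAt_of_wderivBar_zero {G : ℂ → ℂ} {z : ℂ}
    (hG : DifferentiableAt ℝ G z) (h0 : wderivBar G z = 0) : DifferentiableAt ℂ G z := by
  set L := fderiv ℝ G z with hL
  have hLI : L I = I * L 1 := by
    unfold wderivBar at h0
    rw [← hL] at h0
    have h0' : L 1 + I * L I = 0 := by
      field_simp at h0; linear_combination h0
    linear_combination (-I) * h0' + (L I) * Complex.I_sq
  have key : ∀ v : ℂ, L v = v * L 1 := by
    intro v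
    calc L v = (v.re : ℂ) * L 1 + (v.im : ℂ) * (I * L 1) := by rw [clm_expand, hLI]
      _ = v * L 1 := by linear_combination (L 1) * Complex.re_add_im v
  have hF : HasFDerivAt G (ContinuousLinearMap.smulRight (1 : ℂ →L[ℂ] ℂ) (L 1)) z := by
    apply hasFDerivAt_of_restrictScalars ℝ hG.hasFDerivAt
    ext v
    simp only [ContinuousLinearMap.coe_restrictScalars', ContinuousLinearMap.smulRight_apply,
      ContinuousLinearMap.one_apply, smul_eq_mul, key v]
    exact (key v).symm
  exact hF.differentiableAt

lemma hasFDerivAt_impow (s : ℂ) {z : ℂ} (hz : 0 < z.im) :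
    HasFDerivAt (fun w : ℂ => ((w.im : ℂ)) ^ s)
      ((s * ((z.im : ℂ)) ^ (s - 1)) • (Complex.ofRealCLM.comp Complex.imCLM)) z := by
  have hmem : ((z.im : ℂ)) ∈ Complex.slitPlane := Or.inl (by simpa using hz)
  have houter := (Complex.hasStrictDerivAt_cpow_const (c := s) hmem).hasDerivAt
  have houterF := houter.hasFDerivAt.restrictScalars ℝ
  have hinner : HasFDerivAt (fun w : ℂ => ((w.im : ℂ)))
      (Complex.ofRealCLM.comp Complex.imCLM) z :=
    (Complex.ofRealCLM.comp Complex.imCLM).hasFDerivAt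
  have hc := houterF.comp z hinner
  refine hc.congr_fderiv ?_
  ext v
  simp [smul_eq_mul]
  ring

lemma wderivBar_impow (s : ℂ) {z : ℂ} (hz : 0 < z.im) :
    wderivBar (fun w : ℂ => ((w.im : ℂ)) ^ s) z = s * ((z.im : ℂ)) ^ (s - 1) * (I / 2) := by
  unfold wderivBar
  rw [(hasFDerivAt_impow s hz).fderiv]
  simp [smul_eq_mul]
  ring

lemma isOpen_H : IsOpen {z : ℂ | 0 < z.im} := isOpen_lt continuous_const Complex.continuous_im

lemma wderivBar_diffAt {F : ℂ → ℂ} (hF : ContDiffOn ℝ 2 F {z : ℂ | 0 < z.im})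
    {z : ℂ} (hz : 0 < z.im) :
    DifferentiableAt ℝ (fun w => wderivBar F w) z := by
  have h1 : ContDiffOn ℝ 1 (fderiv ℝ F) {z : ℂ | 0 < z.im} :=
    hF.fderiv_of_isOpen isOpen_H (by norm_num)
  have h2 : DifferentiableAt ℝ (fderiv ℝ F) z :=
    ((h1.differentiableOn one_ne_zero) z hz).differentiableAt (isOpen_H.mem_nhds hz)
  have a1 : DifferentiableAt ℝ (fun w => fderiv ℝ F w 1) z :=
    h2.clm_apply (differentiableAt_const _)
  have a2 : DifferentiableAt ℝ (fun w => fderiv ℝ F w I) z :=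
    h2.clm_apply (differentiableAt_const _)
  simp only [wderivBar, div_eq_mul_inv]
  exact (a1.add (a2.const_mul I)).mul_const _

lemma F_diffAt {F : ℂ → ℂ} (hF : ContDiffOn ℝ 2 F {z : ℂ | 0 < z.im})
    {z : ℂ} (hz : 0 < z.im) : DifferentiableAt ℝ F z :=
  ((hF.differentiableOn (by norm_num)) z hz).differentiableAt (isOpen_H.mem_nhds hz)

lemma det_coe (g : Matrix.SpecialLinearGroup (Fin 2) ℝ) :
    g.1 0 0 * g.1 1 1 - g.1 0 1 * g.1 1 0 = 1 := by
  have h := g.2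
  rwa [Matrix.det_fin_two] at h

lemma mdenom_ne_zero (g : Matrix.SpecialLinearGroup (Fin 2) ℝ) {z : ℂ} (hz : 0 < z.im) :
    mdenom g z ≠ 0 := by
  intro h
  have him : g.1 1 0 * z.im = 0 := by
    have := congrArg Complex.im h
    simpa [mdenom] using this
  have hc : g.1 1 0 = 0 := by
    rcases mul_eq_zero.1 him with h1 | h1
    · exact h1
    · exact absurd h1 hz.ne'
  have hre : g.1 1 0 * z.re + g.1 1 1 = 0 := by
    have := congrArg Complex.re h
    simpa [mdenom] using this
  have hd : g.1 1 1 = 0 := by rw [hc] at hre; linarith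
  have := det_coe g
  rw [hc, hd] at this
  simp at this

lemma im_mact (g : Matrix.SpecialLinearGroup (Fin 2) ℝ) {z : ℂ} (hz : 0 < z.im) :
    (mact g z).im = z.im / Complex.normSq (mdenom g z) := by
  have hj := mdenom_ne_zero g hz
  have hN : Complex.normSq (mdenom g z) ≠ 0 := by
    simpa [Complex.normSq_eq_zero] using hj
  have hdet := det_coe g
  rw [mact, Complex.div_im]
  rw [div_sub_div_same]
  have key : ((g.1 0 0 : ℂ) * z + (g.1 0 1 : ℂ)).im * (mdenom g z).re -
      ((g.1 0 0 : ℂ) * z + (g.1 0 1 : ℂ)).re * (mdenom g z).im = z.im := by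
    simp only [mdenom, Complex.add_im, Complex.add_re, Complex.mul_im, Complex.mul_re,
      Complex.ofReal_re, Complex.ofReal_im]
    linear_combination z.im * hdet
  rw [key]

lemma im_mact_pos (g : Matrix.SpecialLinearGroup (Fin 2) ℝ) {z : ℂ} (hz : 0 < z.im) :
    0 < (mact g z).im := by
  rw [im_mact g hz]
  exact div_pos hz (Complex.normSq_pos.2 (mdenom_ne_zero g hz))

lemma hasDerivAt_mact (g : Matrix.SpecialLinearGroup (Fin 2) ℝ) {z : ℂ} (hz : 0 < z.im) :
    HasDerivAt (mact g) ((mdenom g z) ^ 2)⁻¹ z := by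
  have hj := mdenom_ne_zero g hz
  have h1 : HasDerivAt (fun w : ℂ => (g.1 0 0 : ℂ) * w + (g.1 0 1 : ℂ)) (g.1 0 0 : ℂ) z := by
    simpa using ((hasDerivAt_id z).const_mul ((g.1 0 0 : ℝ) : ℂ)).add_const ((g.1 0 1 : ℝ) : ℂ)
  have h2 : HasDerivAt (fun w => mdenom g w) (g.1 1 0 : ℂ) z := by
    simpa [mdenom] using ((hasDerivAt_id z).const_mul ((g.1 1 0 : ℝ) : ℂ)).add_const ((g.1 1 1 : ℝ) : ℂ)
  have h3 := h1.div h2 hj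
  have hdet : (g.1 0 0 : ℂ) * (g.1 1 1 : ℂ) - (g.1 0 1 : ℂ) * (g.1 1 0 : ℂ) = 1 := by
    have := det_coe g
    exact_mod_cast congrArg (fun x : ℝ => (x : ℂ)) this
  have hnum : (g.1 0 0 : ℂ) * mdenom g z - ((g.1 0 0 : ℂ) * z + (g.1 0 1 : ℂ)) * (g.1 1 0 : ℂ) = 1 := by
    rw [mdenom]; linear_combination hdet
  rw [hnum, one_div] at h3
  exact h3

lemma conj_log (j : ℂ) :
    (starRingEnd ℂ) (Complex.log j) = (Real.log (‖j‖) : ℂ) - j.arg * I := by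
  have hlog : Complex.log j = (Real.log (‖j‖) : ℂ) + j.arg * I := rfl
  rw [hlog, map_add, map_mul, Complex.conj_I, Complex.conj_ofReal, Complex.conj_ofReal]
  ring

lemma cpow_key {j : ℂ} (hj : j ≠ 0) {y : ℝ} (hy : 0 < y) (r : ℂ) :
    (y : ℂ) ^ (starRingEnd ℂ r) * (starRingEnd ℂ) (j ^ (-r)) * (j ^ 2)⁻¹
      = j ^ (-((2 : ℂ) - starRingEnd ℂ r)) *
        ((y / Complex.normSq j : ℝ) : ℂ) ^ (starRingEnd ℂ r) := by
  set s := (starRingEnd ℂ) r with hs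
  have hyne : ((y : ℝ) : ℂ) ≠ 0 := Complex.ofReal_ne_zero.2 hy.ne'
  have hN : Complex.normSq j ≠ 0 := by simpa [Complex.normSq_eq_zero] using hj
  have hNpos : 0 < Complex.normSq j := Complex.normSq_pos.2 hj
  have hquotne : (((y / Complex.normSq j : ℝ)) : ℂ) ≠ 0 :=
    Complex.ofReal_ne_zero.2 (div_pos hy hNpos).ne'
  rw [Complex.cpow_def_of_ne_zero hyne, Complex.cpow_def_of_ne_zero hj,
    Complex.cpow_def_of_ne_zero hj, Complex.cpow_def_of_ne_zero hquotne]
  rw [← Complex.ofReal_log hy.le, ← Complex.ofReal_log (div_pos hy hNpos).le]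
  rw [← Complex.exp_conj]
  rw [map_mul, map_neg]
  -- exponential identities
  have habs : Real.log (y / Complex.normSq j) = Real.log y - 2 * Real.log (‖j‖) := by
    rw [Real.log_div hy.ne' hN, ← Complex.sq_norm, Real.log_pow]
    push_cast; ring
  have hjinv : (j ^ 2)⁻¹ = Complex.exp (-(2 * Complex.log j)) := by
    rw [show -(2 * Complex.log j) = -(Complex.log j) + -(Complex.log j) by ring,
      Complex.exp_add, Complex.exp_neg, Complex.exp_log hj]
    rw [sq, mul_inv]
  rw [hjinv, habs]
  rw [← Complex.exp_add, ← Complex.exp_add, ← Complex.exp_add]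
  congr 1
  have hclog := conj_log j
  have hlog : Complex.log j = (Real.log (‖j‖) : ℂ) + j.arg * I := rfl
  rw [hclog, hlog]
  push_cast
  ring

lemma mdenom_diff (g : Matrix.SpecialLinearGroup (Fin 2) ℝ) (z : ℂ) :
    DifferentiableAt ℂ (mdenom g) z := by
  have : DifferentiableAt ℂ (fun w : ℂ => (g.1 1 0 : ℂ) * w + (g.1 1 1 : ℂ)) z :=
    (differentiableAt_id.const_mul _).add_const _
  exact this

lemma diff_denom_pow (g : Matrix.SpecialLinearGroup (Fin 2) ℝ) (r : ℂ) {z : ℂ}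
    (hz : 0 < z.im) :
    DifferentiableAt ℂ (fun w => mdenom g w ^ (-r)) z := by
  by_cases hc : (g.1 1 0 : ℝ) = 0
  · have : (fun w : ℂ => mdenom g w ^ (-r)) = fun _ => ((g.1 1 1 : ℝ) : ℂ) ^ (-r) := by
      funext w
      simp [mdenom, hc]
    rw [this]
    exact differentiableAt_const _
  · have hmem : mdenom g z ∈ Complex.slitPlane := by
      refine Or.inr ?_
      have : (mdenom g z).im = g.1 1 0 * z.im := by simp [mdenom]
      rw [this]
      exact mul_ne_zero hc hz.ne'
    exact (mdenom_diff g z).cpow (differentiableAt_const _) hmem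

lemma part1 (r : ℂ) (F : ℂ → ℂ) (hF : ContDiffOn ℝ 2 F {z : ℂ | 0 < z.im})
    (g : Matrix.SpecialLinearGroup (Fin 2) ℝ) (z : ℂ) (hz : 0 < z.im) :
    shadowOp r (fun w => mdenom g w ^ (-r) * F (mact g w)) z =
      mdenom g z ^ (-((2 : ℂ) - starRingEnd ℂ r)) * shadowOp r F (mact g z) := by
  have hj := mdenom_ne_zero g hz
  have hjd := diff_denom_pow g r hz
  have hmd := hasDerivAt_mact g hz
  have hφdiff : DifferentiableAt ℂ (mact g) z := hmd.differentiableAt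
  have hFd : DifferentiableAt ℝ F (mact g z) := F_diffAt hF (im_mact_pos g hz)
  have hcomp : DifferentiableAt ℝ (fun w => F (mact g w)) z :=
    hFd.comp z (hφdiff.restrictScalars ℝ)
  have hwb : wderivBar (fun w => mdenom g w ^ (-r) * F (mact g w)) z
      = mdenom g z ^ (-r) *
        ((starRingEnd ℂ) (((mdenom g z) ^ 2)⁻¹) * wderivBar F (mact g z)) := by
    rw [wderivBar_holo_mul hjd hcomp, wderivBar_comp hφdiff hFd, hmd.deriv]
  unfold shadowOp
  rw [hwb, im_mact g hz]
  simp only [map_mul, Complex.conj_conj]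
  have key := cpow_key hj hz r
  linear_combination (2 * I * (starRingEnd ℂ) (wderivBar F (mact g z))) * key

lemma part2a (r : ℂ) (F : ℂ → ℂ) (hF : ContDiffOn ℝ 2 F {z : ℂ | 0 < z.im})
    (hharm : ∀ z : ℂ, 0 < z.im → hlaplacian r F z = 0) :
    DifferentiableOn ℂ (shadowOp r F) {z : ℂ | 0 < z.im} := by
  intro z hzmem
  have hz : 0 < z.im := hzmem
  set s := (starRingEnd ℂ) r with hs
  have hyne : ((z.im : ℝ) : ℂ) ≠ 0 := Complex.ofReal_ne_zero.2 hz.ne'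
  have hWdiff := wderivBar_diffAt hF hz
  have hconjfun : (fun w => (starRingEnd ℂ) (wderivBar F w)) =
      fun w => (Complex.conjCLE : ℂ →L[ℝ] ℂ) (wderivBar F w) := by
    funext w; simp [Complex.conjCLE_apply]
  have hQdiff : DifferentiableAt ℝ (fun w => (starRingEnd ℂ) (wderivBar F w)) z := by
    rw [hconjfun]
    exact ((Complex.conjCLE : ℂ →L[ℝ] ℂ).differentiableAt).comp z hWdiff
  have hPdiff0 : DifferentiableAt ℝ (fun w : ℂ => ((w.im : ℂ)) ^ s) z :=
    (hasFDerivAt_impow s hz).differentiableAt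
  have hPdiff : DifferentiableAt ℝ (fun w : ℂ => 2 * I * ((w.im : ℂ)) ^ s) z :=
    hPdiff0.const_mul _
  have hfun : shadowOp r F =
      fun w => (2 * I * ((w.im : ℂ)) ^ s) * ((starRingEnd ℂ) (wderivBar F w)) := rfl
  have hGdiff : DifferentiableAt ℝ (shadowOp r F) z := by
    rw [hfun]; exact hPdiff.mul hQdiff
  apply DifferentiableAt.differentiableWithinAt
  apply differentiableAt_of_wderivBar_zero hGdiff
  rw [hfun]
  rw [wderivBar_mul hPdiff hQdiff]
  rw [wderivBar_const_mul hPdiff0 (2 * I), wderivBar_impow s hz, wderivBar_conj hWdiff]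
  -- use harmonicity
  have h := hharm z hz
  unfold hlaplacian at h
  have hcan : (2 * (z.im : ℂ)) * ((2 * (z.im : ℂ)) * wderiv (fun w => wderivBar F w) z
      - I * r * wderivBar F z) = 0 := by linear_combination -h
  have h2 : (2 * (z.im : ℂ)) * wderiv (fun w => wderivBar F w) z
      - I * r * wderivBar F z = 0 := by
    rcases mul_eq_zero.1 hcan with h' | h'
    · exact absurd h' (by simpa using hyne)
    · exact h'
  have hcc := congrArg (starRingEnd ℂ) h2
  simp only [map_sub, map_mul, map_ofNat, Complex.conj_I, Complex.conj_ofReal, map_zero] at hcc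
  -- hcc : 2 * y * conj W - (-I) * s * conj B = 0
  have hpow : ((z.im : ℂ)) ^ s = ((z.im : ℂ)) ^ (s - 1) * (z.im : ℂ) := by
    calc ((z.im : ℂ)) ^ s = ((z.im : ℂ)) ^ ((s - 1) + 1) := by ring_nf
      _ = ((z.im : ℂ)) ^ (s - 1) * ((z.im : ℂ)) ^ (1 : ℂ) := Complex.cpow_add _ _ hyne
      _ = ((z.im : ℂ)) ^ (s - 1) * (z.im : ℂ) := by rw [Complex.cpow_one]
  rw [hpow]
  linear_combination (I * ((z.im : ℂ)) ^ (s - 1)) * hcc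

/-- the shadow operator satisfies `ξ_r (F|_r g) = (ξ_r F)|_{2-r̄} g` for
every `g ∈ SL₂(ℝ)`; consequently it maps `r`-harmonic `(Γ,v)`-automorphic forms of
weight `r` to holomorphic `(Γ, v̄)`-automorphic forms of weight `2 - r̄`. -/
theorem shadow_equivariance (r : ℂ) (F : ℂ → ℂ)
    (hF : ContDiffOn ℝ 2 F {z : ℂ | 0 < z.im}) :
    (∀ g : Matrix.SpecialLinearGroup (Fin 2) ℝ, ∀ z : ℂ, 0 < z.im →
        shadowOp r (fun w => mdenom g w ^ (-r) * F (mact g w)) z =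
          mdenom g z ^ (-((2 : ℂ) - starRingEnd ℂ r)) * shadowOp r F (mact g z)) ∧
    (∀ (Γ : Subgroup (Matrix.SpecialLinearGroup (Fin 2) ℝ))
        (v : Matrix.SpecialLinearGroup (Fin 2) ℝ → ℂ),
        (∀ z : ℂ, 0 < z.im → hlaplacian r F z = 0) →
        (∀ γ ∈ Γ, ∀ z : ℂ, 0 < z.im →
            (v γ)⁻¹ * mdenom γ z ^ (-r) * F (mact γ z) = F z) →
        DifferentiableOn ℂ (shadowOp r F) {z : ℂ | 0 < z.im} ∧
          ∀ γ ∈ Γ, ∀ z : ℂ, 0 < z.im →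
            (starRingEnd ℂ (v γ))⁻¹ * mdenom γ z ^ (-((2 : ℂ) - starRingEnd ℂ r)) *
                shadowOp r F (mact γ z) = shadowOp r F z) := by
  constructor
  · exact fun g z hz => part1 r F hF g z hz
  · intro Γ v hharm hv
    refine ⟨part2a r F hF hharm, ?_⟩
    intro γ hγ z hz'
    set c := (v γ)⁻¹ with hc
    have hdiff : DifferentiableAt ℝ (fun w => mdenom γ w ^ (-r) * F (mact γ w)) z :=
      ((diff_denom_pow γ r hz').restrictScalars ℝ).mul
        ((F_diffAt hF (im_mact_pos γ hz')).comp z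
          (((hasDerivAt_mact γ hz').differentiableAt).restrictScalars ℝ))
    have heq : F =ᶠ[nhds z] fun w => c * (mdenom γ w ^ (-r) * F (mact γ w)) := by
      filter_upwards [isOpen_H.mem_nhds hz'] with w hw
      have h := hv γ hγ w hw
      rw [← h]; ring
    have hB := wderivBar_congr heq
    rw [wderivBar_const_mul hdiff c] at hB
    have hS : shadowOp r F z = (starRingEnd ℂ) c *
        shadowOp r (fun w => mdenom γ w ^ (-r) * F (mact γ w)) z := by
      unfold shadowOp
      rw [hB, map_mul]
      ring
    rw [hS, part1 r F hF γ z hz',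
      show (starRingEnd ℂ) c = ((starRingEnd ℂ) (v γ))⁻¹ from map_inv₀ _ _]
    ring
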